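/- Let F be a finite field and set r = 1 − 1/|F|. Let m ≥ 3 be a natural number and c > 0 a real number. On a probability space, let W₁, …, W_m be mutually independent real-valued random variables, each with law having probability density z ↦ ν(z − log₂(c/m), r) with respect to Lebesgue measure. Define the estimator Ẑ = φ(1/m, r)^{−m} · m · 2^{(1/m)·Σ_{i=1}^m W_i}. Then the variance of Ẑ equals Var(Ẑ) = (φ(1/m, r)^{−2m} · φ(2/m, r)^{m} − 1) · c². -/

import Mathlib

open MeasureTheory ProbabilityTheory Real Set Filter
open scoped NNReal ENNReal

/-- The density `ν(z, r)` of the highest position of an F-PCSA subsketch. -/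
noncomputable def nu (z r : ℝ) : ℝ :=
  (1 - Real.exp (-(2:ℝ) ^ (-z))) * r *
    ∏' j : ℕ, (1 - (1 - Real.exp (-(2:ℝ) ^ (-z - ((j : ℝ) + 1)))) * r)

noncomputable def nuF (r z : ℝ) (j : ℕ) : ℝ :=
  1 - (1 - Real.exp (-(2:ℝ) ^ (-z - ((j : ℝ) + 1)))) * r

lemma nu_eq (z r : ℝ) : nu z r = (1 - Real.exp (-(2:ℝ) ^ (-z))) * r * ∏' j, nuF r z j := rfl

section facts
variable {r z : ℝ} (hr0 : 0 ≤ r) (hr1 : r < 1)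
include hr0 hr1

omit hr0 hr1 in
lemma head_mem : 0 < 1 - Real.exp (-(2:ℝ) ^ (-z)) ∧ 1 - Real.exp (-(2:ℝ) ^ (-z)) ≤ (2:ℝ) ^ (-z) := by
  have hy : (0:ℝ) < (2:ℝ) ^ (-z) := Real.rpow_pos_of_pos two_pos _
  constructor
  · have := Real.exp_lt_one_iff.2 (neg_neg_iff_pos.2 hy)
    linarith
  · have := Real.add_one_le_exp (-((2:ℝ) ^ (-z)))
    linarith

omit hr1 in
lemma nuF_bounds (j : ℕ) : 1 - r ≤ nuF r z j ∧ nuF r z j ≤ 1 := by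
  have hy : (0:ℝ) < (2:ℝ) ^ (-z - ((j : ℝ) + 1)) := Real.rpow_pos_of_pos two_pos _
  have h1 : Real.exp (-(2:ℝ) ^ (-z - ((j : ℝ) + 1))) < 1 :=
    Real.exp_lt_one_iff.2 (neg_neg_iff_pos.2 hy)
  have h2 : 0 < Real.exp (-(2:ℝ) ^ (-z - ((j : ℝ) + 1))) := Real.exp_pos _
  have hb0 : 0 ≤ (1 - Real.exp (-(2:ℝ) ^ (-z - ((j : ℝ) + 1)))) * r :=
    mul_nonneg (by linarith) hr0
  have hb1 : (1 - Real.exp (-(2:ℝ) ^ (-z - ((j : ℝ) + 1)))) * r ≤ r :=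
    mul_le_of_le_one_left hr0 (by linarith)
  exact ⟨by simp only [nuF]; linarith, by simp only [nuF]; linarith⟩

lemma nuF_pos (j : ℕ) : 0 < nuF r z j :=
  lt_of_lt_of_le (by linarith) (nuF_bounds hr0 j).1

omit hr0 in
lemma one_sub_nuF_le (j : ℕ) :
    1 - nuF r z j ≤ (2:ℝ) ^ (-z - 1) * (2⁻¹ : ℝ) ^ j := by
  have hy : (0:ℝ) < (2:ℝ) ^ (-z - ((j : ℝ) + 1)) := Real.rpow_pos_of_pos two_pos _
  have h1 : 1 - Real.exp (-(2:ℝ) ^ (-z - ((j : ℝ) + 1))) ≤ (2:ℝ) ^ (-z - ((j : ℝ) + 1)) := by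
    have := Real.add_one_le_exp (-(2:ℝ) ^ (-z - ((j : ℝ) + 1))); linarith
  have h2 : Real.exp (-(2:ℝ) ^ (-z - ((j : ℝ) + 1))) < 1 :=
    Real.exp_lt_one_iff.2 (neg_neg_iff_pos.2 hy)
  have key : (2:ℝ) ^ (-z - ((j : ℝ) + 1)) = (2:ℝ) ^ (-z - 1) * (2⁻¹ : ℝ) ^ j := by
    rw [show -z - ((j : ℝ) + 1) = (-z - 1) + (-(j:ℝ)) by ring, Real.rpow_add two_pos,
      Real.rpow_neg (by norm_num : (0:ℝ) ≤ 2), Real.rpow_natCast, inv_pow]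
  have : 1 - nuF r z j = (1 - Real.exp (-(2:ℝ) ^ (-z - ((j : ℝ) + 1)))) * r := by
    simp [nuF]
  rw [this, ← key]
  calc (1 - Real.exp (-(2:ℝ) ^ (-z - ((j : ℝ) + 1)))) * r
      ≤ (1 - Real.exp (-(2:ℝ) ^ (-z - ((j : ℝ) + 1)))) * 1 :=
        mul_le_mul_of_nonneg_left (by linarith) (by linarith)
    _ ≤ (2:ℝ) ^ (-z - ((j : ℝ) + 1)) := by rw [mul_one]; exact h1

lemma summable_log_nuF : Summable (fun j => Real.log (nuF r z j)) := by
  rw [← summable_neg_iff]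
  have hsum : Summable (fun j : ℕ => (1 - r)⁻¹ * ((2:ℝ) ^ (-z - 1) * (2⁻¹ : ℝ) ^ j)) :=
    ((summable_geometric_of_lt_one (by norm_num) (by norm_num)).mul_left
      ((2:ℝ) ^ (-z - 1))).mul_left (1 - r)⁻¹
  refine Summable.of_nonneg_of_le (fun j => ?_) (fun j => ?_) hsum
  · have h1 := (nuF_bounds hr0 (z := z) j).2
    have h2 := nuF_pos hr0 hr1 (z := z) j
    simpa using Real.log_nonpos h2.le h1
  · have hf := nuF_pos hr0 hr1 (z := z) j
    have hfl := (nuF_bounds hr0 (z := z) j).1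
    have hfu := (nuF_bounds hr0 (z := z) j).2
    have h3 := Real.one_sub_inv_le_log_of_pos hf
    have h4 : -Real.log (nuF r z j) ≤ (nuF r z j)⁻¹ - 1 := by linarith
    have h5 : (nuF r z j)⁻¹ - 1 = (nuF r z j)⁻¹ * (1 - nuF r z j) := by
      field_simp
    have h6 : (nuF r z j)⁻¹ ≤ (1 - r)⁻¹ := by
      apply inv_anti₀ (by linarith) hfl
    calc -Real.log (nuF r z j) ≤ (nuF r z j)⁻¹ * (1 - nuF r z j) := by rw [← h5]; exact h4
      _ ≤ (1 - r)⁻¹ * ((2:ℝ) ^ (-z - 1) * (2⁻¹ : ℝ) ^ j) := by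
          have h7 : (0:ℝ) ≤ (1 - r)⁻¹ := by
            have : (0:ℝ) < 1 - r := by linarith
            positivity
          apply mul_le_mul h6 (one_sub_nuF_le hr1 j) (by linarith) h7

lemma multipliable_nuF : Multipliable (fun j => nuF r z j) :=
  Real.multipliable_of_summable_log (fun j => nuF_pos hr0 hr1 j) (summable_log_nuF hr0 hr1)

lemma tprod_nuF_pos : 0 < ∏' j, nuF r z j := by
  have h : HasProd (fun j => nuF r z j)
      (Real.exp (∑' j, Real.log (nuF r z j))) := by
    have h0 := (summable_log_nuF hr0 hr1 (z := z)).hasSum.rexp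
    have heq : (Real.exp ∘ fun j => Real.log (nuF r z j)) = fun j => nuF r z j :=
      funext fun j => Real.exp_log (nuF_pos hr0 hr1 j)
    rwa [heq] at h0
  rw [h.tprod_eq]
  exact Real.exp_pos _

lemma tprod_nuF_le_prod (n : ℕ) :
    ∏' j, nuF r z j ≤ ∏ j ∈ Finset.range n, nuF r z j := by
  refine le_of_tendsto (multipliable_nuF hr0 hr1).hasProd ?_
  filter_upwards [Filter.eventually_ge_atTop (Finset.range n)] with s hs
  rw [← Finset.prod_sdiff hs]
  apply mul_le_of_le_one_left
  · exact Finset.prod_nonneg (fun j _ => (nuF_pos hr0 hr1 j).le)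
  · exact Finset.prod_le_one (fun j _ => (nuF_pos hr0 hr1 j).le)
      (fun j _ => (nuF_bounds hr0 j).2)

lemma tprod_nuF_le_one : ∏' j, nuF r z j ≤ 1 := by
  simpa using tprod_nuF_le_prod hr0 hr1 (z := z) 0

lemma nu_nonneg : 0 ≤ nu z r := by
  rw [nu_eq]
  exact mul_nonneg (mul_nonneg (head_mem (z := z)).1.le hr0)
    (tprod_nuF_pos hr0 hr1).le

lemma nu_pos (hr0' : 0 < r) : 0 < nu z r := by
  rw [nu_eq]
  exact mul_pos (mul_pos (head_mem (z := z)).1 hr0') (tprod_nuF_pos hr0 hr1)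

lemma nu_le_one : nu z r ≤ 1 := by
  rw [nu_eq]
  have h1 := (head_mem (z := z)).1
  have h2 : 1 - Real.exp (-(2:ℝ) ^ (-z)) ≤ 1 := by
    have := Real.exp_pos (-(2:ℝ) ^ (-z)); linarith
  calc (1 - Real.exp (-(2:ℝ) ^ (-z))) * r * ∏' j, nuF r z j
      ≤ 1 * 1 * 1 := by
        apply mul_le_mul (mul_le_mul h2 hr1.le hr0 (by norm_num))
          (tprod_nuF_le_one hr0 hr1) (tprod_nuF_pos hr0 hr1).le (by norm_num)
    _ = 1 := by norm_num

lemma nu_le_rpow : nu z r ≤ (2:ℝ) ^ (-z) := by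
  rw [nu_eq]
  have h1 := (head_mem (z := z)).1
  have h2 := (head_mem (z := z)).2
  calc (1 - Real.exp (-(2:ℝ) ^ (-z))) * r * ∏' j, nuF r z j
      ≤ (2:ℝ) ^ (-z) * 1 * 1 := by
        apply mul_le_mul (mul_le_mul h2 hr1.le hr0 (Real.rpow_pos_of_pos two_pos _).le)
          (tprod_nuF_le_one hr0 hr1) (tprod_nuF_pos hr0 hr1).le
          (by positivity)
    _ = (2:ℝ) ^ (-z) := by ring
end facts

section facts2
variable {r z : ℝ} (hr0 : 0 ≤ r) (hr1 : r < 1)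
include hr0 hr1

lemma q_pos : 0 < 1 - (1 - Real.exp (-2)) * r := by
  have h1 : (0:ℝ) < Real.exp (-2) := Real.exp_pos _
  have h2 : (1 - Real.exp (-2)) * r ≤ r := mul_le_of_le_one_left hr0 (by linarith)
  linarith

omit hr1 in
lemma q_le_one : 1 - (1 - Real.exp (-2)) * r ≤ 1 := by
  have h1 : Real.exp (-2) < 1 := Real.exp_lt_one_iff.2 (by norm_num)
  nlinarith

lemma nu_le_q : nu z r ≤ (1 - (1 - Real.exp (-2)) * r) ^ (-z - 2) := by
  set q := 1 - (1 - Real.exp (-2)) * r with hq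
  have hq0 := q_pos hr0 hr1
  have hq1 : q ≤ 1 := q_le_one hr0
  rcases le_or_gt (-z - 2) 0 with h | h
  · calc nu z r ≤ 1 := nu_le_one hr0 hr1
      _ ≤ q ^ (-z - 2) := Real.one_le_rpow_of_pos_of_le_one_of_nonpos hq0 hq1 h
  · set n := ⌈-z - 2⌉₊ with hn
    have hxn : -z - 2 ≤ (n:ℝ) := Nat.le_ceil _
    have hT : nu z r ≤ ∏' j, nuF r z j := by
      rw [nu_eq]
      have h1 := (head_mem (z := z)).1
      have h2 : 1 - Real.exp (-(2:ℝ) ^ (-z)) ≤ 1 := by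
        have := Real.exp_pos (-(2:ℝ) ^ (-z)); linarith
      have hT0 := (tprod_nuF_pos hr0 hr1 (z := z)).le
      calc (1 - Real.exp (-(2:ℝ) ^ (-z))) * r * ∏' j, nuF r z j
          ≤ 1 * 1 * ∏' j, nuF r z j := by
            apply mul_le_mul_of_nonneg_right (mul_le_mul h2 hr1.le hr0 (by norm_num)) hT0
        _ = ∏' j, nuF r z j := by ring
    have hfac : ∀ j ∈ Finset.range n, nuF r z j ≤ q := by
      intro j hj
      have hjx : (j:ℝ) < -z - 2 := by
        rw [Finset.mem_range, hn, Nat.lt_ceil] at hj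
        exact hj
      have hy : (2:ℝ) ≤ (2:ℝ) ^ (-z - ((j : ℝ) + 1)) := by
        calc (2:ℝ) = (2:ℝ) ^ (1:ℝ) := (Real.rpow_one 2).symm
          _ ≤ (2:ℝ) ^ (-z - ((j : ℝ) + 1)) :=
            Real.rpow_le_rpow_of_exponent_le (by norm_num) (by linarith)
      have hexp : Real.exp (-(2:ℝ) ^ (-z - ((j : ℝ) + 1))) ≤ Real.exp (-2) :=
        Real.exp_le_exp.2 (by linarith)
      simp only [nuF, hq]
      have := mul_le_mul_of_nonneg_right (by linarith :
        1 - Real.exp (-2) ≤ 1 - Real.exp (-(2:ℝ) ^ (-z - ((j : ℝ) + 1)))) hr0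
      linarith
    calc nu z r ≤ ∏' j, nuF r z j := hT
      _ ≤ ∏ j ∈ Finset.range n, nuF r z j := tprod_nuF_le_prod hr0 hr1 n
      _ ≤ ∏ j ∈ Finset.range n, q :=
          Finset.prod_le_prod (fun j _ => (nuF_pos hr0 hr1 j).le) hfac
      _ = q ^ (n:ℕ) := by rw [Finset.prod_const, Finset.card_range]
      _ = q ^ ((n:ℕ):ℝ) := (Real.rpow_natCast q n).symm
      _ ≤ q ^ (-z - 2) := Real.rpow_le_rpow_of_exponent_ge hq0 hq1 hxn

omit hr0 hr1 in
lemma continuous_two_rpow (a b : ℝ) : Continuous fun z : ℝ => (2:ℝ) ^ (a * z + b) := by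
  have : (fun z : ℝ => (2:ℝ) ^ (a * z + b)) =
      fun z : ℝ => Real.exp (Real.log 2 * (a * z + b)) := by
    funext z; rw [Real.rpow_def_of_pos two_pos]
  rw [this]
  exact Real.continuous_exp.comp
    (continuous_const.mul ((continuous_const.mul continuous_id).add continuous_const))

lemma measurable_nu : Measurable (fun z => nu z r) := by
  apply measurable_of_tendsto_metrizable
    (f := fun n z => (1 - Real.exp (-(2:ℝ) ^ (-z))) * r * ∏ j ∈ Finset.range n, nuF r z j)
  · intro n
    apply Measurable.mul
    · apply Measurable.mul ?_ measurable_const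
      apply Measurable.const_sub
      apply (Real.continuous_exp.comp ?_).measurable
      apply Continuous.neg
      simpa [neg_mul, one_mul] using continuous_two_rpow (-1) 0
    · apply Finset.measurable_prod
      intro j _
      apply Measurable.const_sub
      apply Measurable.mul_const
      apply Measurable.const_sub
      apply (Real.continuous_exp.comp ?_).measurable
      apply Continuous.neg
      simpa [neg_mul, one_mul, sub_eq_add_neg] using continuous_two_rpow (-1) (-((j:ℝ) + 1))
  · rw [tendsto_pi_nhds]
    intro z
    rw [nu_eq]
    exact ((multipliable_nuF hr0 hr1 (z := z)).hasProd.tendsto_prod_nat).const_mul _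

end facts2

/-- `φ(t, r) = ∫ 2^{tz} ν(z, r) dz`. -/
noncomputable def phi (t r : ℝ) : ℝ := ∫ z : ℝ, (2:ℝ) ^ (t * z) * nu z r

lemma integrableOn_exp_mul_Iic' {b : ℝ} (hb : 0 < b) (c : ℝ) :
    IntegrableOn (fun z : ℝ => Real.exp (b * z)) (Iic c) volume := by
  have m : MeasurableEmbedding fun x : ℝ => -x := (Homeomorph.neg ℝ).measurableEmbedding
  have h : IntegrableOn ((fun z : ℝ => Real.exp (b * z)) ∘ fun x : ℝ => -x)
      ((fun x : ℝ => -x) ⁻¹' (Iic c)) volume := by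
    simp_rw [Function.comp_def, neg_preimage, neg_Iic, mul_neg, ← neg_mul]
    rw [integrableOn_Ici_iff_integrableOn_Ioi]
    exact exp_neg_integrableOn_Ioi (-c) hb
  have h2 := (m.integrableOn_map_iff (f := fun z : ℝ => Real.exp (b * z)) (s := Iic c)).2 h
  rwa [Measure.map_neg_eq_self (volume : Measure ℝ)] at h2

section facts3
variable {r : ℝ} (hr0 : 0 < r) (hr1 : r < 1) {t : ℝ} (ht0 : 0 ≤ t) (ht1 : t < 1)
include hr0 hr1

omit hr1 in
lemma q_lt_one : 1 - (1 - Real.exp (-2)) * r < 1 := by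
  have h1 : Real.exp (-2) < 1 := Real.exp_lt_one_iff.2 (by norm_num)
  nlinarith

lemma measurable_rpow_mul_nu : Measurable (fun z => (2:ℝ) ^ (t * z) * nu z r) := by
  apply Measurable.mul ?_ (measurable_nu hr0.le hr1)
  have := (continuous_two_rpow t 0).measurable
  simpa using this

include ht0 ht1 in
lemma integrable_rpow_mul_nu :
    Integrable (fun z => (2:ℝ) ^ (t * z) * nu z r) volume := by
  set q := 1 - (1 - Real.exp (-2)) * r with hq
  have hq0 : 0 < q := q_pos hr0.le hr1
  have hq1 : q < 1 := q_lt_one hr0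
  have hlogq : Real.log q < 0 := Real.log_neg hq0 hq1
  have hlog2 : 0 < Real.log 2 := Real.log_pos (by norm_num)
  have hmeas : AEStronglyMeasurable (fun z => (2:ℝ) ^ (t * z) * nu z r) (volume : Measure ℝ) :=
    (measurable_rpow_mul_nu hr0 hr1 (t := t)).aestronglyMeasurable
  have hnonneg : ∀ z, 0 ≤ (2:ℝ) ^ (t * z) * nu z r := fun z =>
    mul_nonneg (Real.rpow_nonneg (by norm_num) _) (nu_nonneg hr0.le hr1)
  rw [← integrableOn_univ, ← Set.Iic_union_Ioi (a := (0:ℝ))]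
  apply IntegrableOn.union
  · have hb : 0 < t * Real.log 2 - Real.log q := by nlinarith
    apply Integrable.mono'
      ((integrableOn_exp_mul_Iic' hb 0).const_mul (Real.exp (-2 * Real.log q)))
      hmeas.restrict
    apply Filter.Eventually.of_forall
    intro z
    rw [Real.norm_eq_abs, abs_of_nonneg (hnonneg z)]
    calc (2:ℝ) ^ (t * z) * nu z r
        ≤ (2:ℝ) ^ (t * z) * q ^ (-z - 2) :=
          mul_le_mul_of_nonneg_left (nu_le_q hr0.le hr1)
            (Real.rpow_nonneg (by norm_num) _)
      _ = Real.exp (-2 * Real.log q) *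
            Real.exp ((t * Real.log 2 - Real.log q) * z) := by
          rw [Real.rpow_def_of_pos two_pos, Real.rpow_def_of_pos hq0,
            ← Real.exp_add, ← Real.exp_add]
          congr 1; ring
  · have hb : 0 < (1 - t) * Real.log 2 := by nlinarith
    apply Integrable.mono' (exp_neg_integrableOn_Ioi 0 hb) hmeas.restrict
    apply Filter.Eventually.of_forall
    intro z
    rw [Real.norm_eq_abs, abs_of_nonneg (hnonneg z)]
    calc (2:ℝ) ^ (t * z) * nu z r
        ≤ (2:ℝ) ^ (t * z) * (2:ℝ) ^ (-z) :=
          mul_le_mul_of_nonneg_left (nu_le_rpow hr0.le hr1)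
            (Real.rpow_nonneg (by norm_num) _)
      _ = Real.exp (-((1 - t) * Real.log 2) * z) := by
          rw [Real.rpow_def_of_pos two_pos, Real.rpow_def_of_pos two_pos,
            ← Real.exp_add]
          congr 1; ring

include ht0 ht1 in
lemma phi_pos : 0 < phi t r := by
  rw [phi, integral_pos_iff_support_of_nonneg
    (fun z => mul_nonneg (Real.rpow_nonneg (by norm_num) _) (nu_nonneg hr0.le hr1))
    (integrable_rpow_mul_nu hr0 hr1 ht0 ht1)]
  have hsupp : Function.support (fun z => (2:ℝ) ^ (t * z) * nu z r) = Set.univ := by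
    apply Set.eq_univ_of_forall
    intro z
    exact (mul_pos (Real.rpow_pos_of_pos two_pos _)
      (nu_pos hr0.le hr1 hr0)).ne'
  rw [hsupp]
  simp

end facts3

section moment
variable {r t s₀ : ℝ} {Ω : Type*} [MeasurableSpace Ω] {μ : Measure Ω} {Wi : Ω → ℝ}

lemma exp_key (x : ℝ) : Real.exp ((t * Real.log 2) * x)
    = (2:ℝ) ^ (t * s₀) * (2:ℝ) ^ (t * (x - s₀)) := by
  rw [Real.rpow_def_of_pos two_pos, Real.rpow_def_of_pos two_pos, ← Real.exp_add]
  congr 1; ring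

lemma shifted_integrand_eq (hr0 : 0 < r) (hr1 : r < 1) :
    (fun x : ℝ => (Real.toNNReal (nu (x - s₀) r) : ℝ≥0) • Real.exp ((t * Real.log 2) * x))
      = fun x : ℝ => (2:ℝ) ^ (t * s₀) * ((2:ℝ) ^ (t * (x - s₀)) * nu (x - s₀) r) := by
  funext x
  rw [NNReal.smul_def, smul_eq_mul, Real.coe_toNNReal _ (nu_nonneg hr0.le hr1), exp_key (s₀ := s₀)]
  ring

lemma measurable_densityNN (hr0 : 0 < r) (hr1 : r < 1) :
    Measurable (fun z : ℝ => Real.toNNReal (nu (z - s₀) r)) :=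
  ((measurable_nu hr0.le hr1).comp (measurable_id.sub measurable_const)).real_toNNReal

lemma measurable_expt : Measurable (fun x : ℝ => Real.exp ((t * Real.log 2) * x)) :=
  Real.measurable_exp.comp (measurable_const.mul measurable_id)

lemma density_eq_coe :
    (fun z : ℝ => ENNReal.ofReal (nu (z - s₀) r))
      = fun z : ℝ => ((fun y : ℝ => Real.toNNReal (nu (y - s₀) r)) z : ℝ≥0∞) := rfl

lemma integrable_shifted (hr0 : 0 < r) (hr1 : r < 1) (ht0 : 0 ≤ t) (ht1 : t < 1) :
    Integrable (fun x : ℝ => Real.exp ((t * Real.log 2) * x))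
      (volume.withDensity (fun z => ENNReal.ofReal (nu (z - s₀) r))) := by
  rw [density_eq_coe,
    integrable_withDensity_iff_integrable_smul (measurable_densityNN hr0 hr1),
    shifted_integrand_eq hr0 hr1]
  exact ((integrable_rpow_mul_nu hr0 hr1 ht0 ht1).comp_sub_right s₀).const_mul _

lemma integrable_exp_mul_W (hr0 : 0 < r) (hr1 : r < 1) (ht0 : 0 ≤ t) (ht1 : t < 1)
    (hW : Measurable Wi)
    (hlaw : μ.map Wi = volume.withDensity (fun z => ENNReal.ofReal (nu (z - s₀) r))) :
    Integrable (fun ω => Real.exp ((t * Real.log 2) * Wi ω)) μ := by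
  have hiff := integrable_map_measure (μ := μ) (f := Wi)
    (g := fun x : ℝ => Real.exp ((t * Real.log 2) * x))
    measurable_expt.aestronglyMeasurable hW.aemeasurable
  rw [hlaw] at hiff
  exact hiff.mp (integrable_shifted hr0 hr1 ht0 ht1)

lemma integral_exp_mul_W (hr0 : 0 < r) (hr1 : r < 1) (ht0 : 0 ≤ t) (ht1 : t < 1)
    (hW : Measurable Wi)
    (hlaw : μ.map Wi = volume.withDensity (fun z => ENNReal.ofReal (nu (z - s₀) r))) :
    μ[fun ω => Real.exp ((t * Real.log 2) * Wi ω)] = (2:ℝ) ^ (t * s₀) * phi t r := by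
  have hmap := integral_map (μ := μ) (φ := Wi) (f := fun x : ℝ => Real.exp ((t * Real.log 2) * x))
    hW.aemeasurable measurable_expt.aestronglyMeasurable
  rw [hlaw] at hmap
  calc μ[fun ω => Real.exp ((t * Real.log 2) * Wi ω)]
      = ∫ x, Real.exp ((t * Real.log 2) * x)
          ∂(volume.withDensity (fun z => ENNReal.ofReal (nu (z - s₀) r))) := hmap.symm
    _ = ∫ x, (Real.toNNReal (nu (x - s₀) r) : ℝ≥0) • Real.exp ((t * Real.log 2) * x) := by
        rw [density_eq_coe, integral_withDensity_eq_integral_smul (measurable_densityNN hr0 hr1)]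
    _ = ∫ x, (2:ℝ) ^ (t * s₀) * ((2:ℝ) ^ (t * (x - s₀)) * nu (x - s₀) r) := by
        rw [shifted_integrand_eq hr0 hr1]
    _ = (2:ℝ) ^ (t * s₀) * ∫ x, (2:ℝ) ^ (t * (x - s₀)) * nu (x - s₀) r := by
        rw [integral_const_mul]
    _ = (2:ℝ) ^ (t * s₀) * phi t r := by
        rw [phi]
        congr 1
        exact integral_sub_right_eq_self (fun z => (2:ℝ) ^ (t * z) * nu z r) s₀

end moment

/-- Variance of the F-PCSA estimator: if `W₁, …, W_m` are independent,
each with density `z ↦ ν(z − log₂(c/m), 1 − |F|⁻¹)`, then the estimator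
`Ẑ = φ(1/m, r)^{−m} m 2^{(1/m) ∑ Wᵢ}` satisfies
`Var(Ẑ) = (φ(1/m, r)^{−2m} φ(2/m, r)^{m} − 1) c²`. -/
theorem stmt_8 (F : Type*) [Field F] [Fintype F]
    (m : ℕ) (hm : 3 ≤ m) (c : ℝ) (hc : 0 < c)
    (Ω : Type*) [MeasurableSpace Ω] (μ : Measure Ω) [IsProbabilityMeasure μ]
    (W : Fin m → Ω → ℝ) (hWmeas : ∀ i, Measurable (W i))
    (hindep : iIndepFun W μ)
    (hWlaw : ∀ i, μ.map (W i) = volume.withDensity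
      (fun z => ENNReal.ofReal (nu (z - Real.logb 2 (c / m)) (1 - (Fintype.card F : ℝ)⁻¹)))) :
    variance
      (fun ω => (phi (1 / m) (1 - (Fintype.card F : ℝ)⁻¹) ^ m)⁻¹ * m *
        (2:ℝ) ^ ((1 / (m:ℝ)) * ∑ i, W i ω)) μ
      = ((phi (1 / m) (1 - (Fintype.card F : ℝ)⁻¹) ^ (2 * m))⁻¹ *
          phi (2 / m) (1 - (Fintype.card F : ℝ)⁻¹) ^ m - 1) * c ^ 2 := by
  -- basic facts
  set r : ℝ := 1 - (Fintype.card F : ℝ)⁻¹ with hrdef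
  have hcard : (2:ℝ) ≤ (Fintype.card F : ℝ) := by
    exact_mod_cast Fintype.one_lt_card (α := F)
  have hr0 : 0 < r := by
    have h1 : (Fintype.card F : ℝ)⁻¹ ≤ 2⁻¹ := by
      apply inv_anti₀ (by norm_num) hcard
    rw [hrdef]; norm_num at h1 ⊢; linarith
  have hr1 : r < 1 := by
    have h1 : 0 < (Fintype.card F : ℝ)⁻¹ := by positivity
    rw [hrdef]; linarith
  have hm0 : (m:ℝ) ≠ 0 := by positivity
  have hm3 : (3:ℝ) ≤ (m:ℝ) := by exact_mod_cast hm
  have hmpos : (0:ℝ) < m := by linarith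
  set t1 : ℝ := 1 / (m:ℝ) with ht1def
  set t2 : ℝ := 2 / (m:ℝ) with ht2def
  have ht10 : 0 ≤ t1 := by positivity
  have ht11 : t1 < 1 := by rw [ht1def, div_lt_one hmpos]; linarith
  have ht20 : 0 ≤ t2 := by positivity
  have ht21 : t2 < 1 := by rw [ht2def, div_lt_one hmpos]; linarith
  set s₀ : ℝ := Real.logb 2 (c / m) with hs₀def
  have h2s : (2:ℝ) ^ (s₀:ℝ) = c / m :=
    Real.rpow_logb two_pos (by norm_num) (div_pos hc hmpos)
  have hφ1 : 0 < phi t1 r := phi_pos hr0 hr1 ht10 ht11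
  set K : ℝ := (phi t1 r ^ m)⁻¹ * m with hKdef
  -- per-coordinate facts
  have hInt1 : ∀ i, Integrable (fun ω => Real.exp ((t1 * Real.log 2) * W i ω)) μ :=
    fun i => integrable_exp_mul_W hr0 hr1 ht10 ht11 (hWmeas i) (hWlaw i)
  have hInt2 : ∀ i, Integrable (fun ω => Real.exp ((t2 * Real.log 2) * W i ω)) μ :=
    fun i => integrable_exp_mul_W hr0 hr1 ht20 ht21 (hWmeas i) (hWlaw i)
  have hmgf1 : ∀ i : Fin m, mgf (W i) μ (t1 * Real.log 2) = (2:ℝ) ^ (t1 * s₀) * phi t1 r :=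
    fun i => integral_exp_mul_W hr0 hr1 ht10 ht11 (hWmeas i) (hWlaw i)
  have hmgf2 : ∀ i : Fin m, mgf (W i) μ (t2 * Real.log 2) = (2:ℝ) ^ (t2 * s₀) * phi t2 r :=
    fun i => integral_exp_mul_W hr0 hr1 ht20 ht21 (hWmeas i) (hWlaw i)
  -- rewrite the estimator
  have hZ : (fun ω => (phi (1 / m) (1 - (Fintype.card F : ℝ)⁻¹) ^ m)⁻¹ * m *
        (2:ℝ) ^ ((1 / (m:ℝ)) * ∑ i, W i ω))
      = fun ω => K * Real.exp ((t1 * Real.log 2) * (∑ i, W i) ω) := by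
    funext ω
    rw [Real.rpow_def_of_pos two_pos]
    rw [hKdef]
    congr 2
    · rw [Finset.sum_apply]
      ring
  rw [hZ]
  -- sums and mgf
  have hsum_eq : (∑ i, W i) = fun a => ∑ i, W i a := by
    funext a; simp
  have hSmeas : Measurable (∑ i, W i) := by
    rw [hsum_eq]
    exact Finset.measurable_sum Finset.univ (fun i _ => hWmeas i)
  have hXmeas : Measurable (fun ω => K * Real.exp ((t1 * Real.log 2) * (∑ i, W i) ω)) :=
    (Real.measurable_exp.comp (measurable_const.mul hSmeas)).const_mul K
  have hsum1 : Integrable (fun ω => Real.exp ((t1 * Real.log 2) * (∑ i, W i) ω)) μ :=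
    hindep.integrable_exp_mul_sum hWmeas (fun i _ => hInt1 i)
  have hsum2 : Integrable (fun ω => Real.exp ((t2 * Real.log 2) * (∑ i, W i) ω)) μ :=
    hindep.integrable_exp_mul_sum hWmeas (fun i _ => hInt2 i)
  have hptw : ∀ ω, (K * Real.exp ((t1 * Real.log 2) * (∑ i, W i) ω)) ^ 2
      = K ^ 2 * Real.exp ((t2 * Real.log 2) * (∑ i, W i) ω) := by
    intro ω
    rw [mul_pow, ← Real.exp_nat_mul]
    congr 2
    push_cast
    rw [ht1def, ht2def]
    ring
  have hsq : (fun ω => K * Real.exp ((t1 * Real.log 2) * (∑ i, W i) ω)) ^ 2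
      = fun ω => K ^ 2 * Real.exp ((t2 * Real.log 2) * (∑ i, W i) ω) := by
    funext ω
    rw [Pi.pow_apply, hptw ω]
  have hmem : MemLp (fun ω => K * Real.exp ((t1 * Real.log 2) * (∑ i, W i) ω)) 2 μ := by
    rw [memLp_two_iff_integrable_sq hXmeas.aestronglyMeasurable]
    have heq : (fun x => (K * Real.exp ((t1 * Real.log 2) * (∑ i, W i) x)) ^ 2)
        = fun ω => K ^ 2 * Real.exp ((t2 * Real.log 2) * (∑ i, W i) ω) :=
      funext fun ω => hptw ω
    rw [heq]
    exact hsum2.const_mul _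
  have hmgfS1 : mgf (∑ i, W i) μ (t1 * Real.log 2) = ((2:ℝ) ^ (t1 * s₀) * phi t1 r) ^ m := by
    rw [hindep.mgf_sum hWmeas Finset.univ]
    rw [Finset.prod_congr rfl (fun i _ => hmgf1 i), Finset.prod_const, Finset.card_univ,
      Fintype.card_fin]
  have hmgfS2 : mgf (∑ i, W i) μ (t2 * Real.log 2) = ((2:ℝ) ^ (t2 * s₀) * phi t2 r) ^ m := by
    rw [hindep.mgf_sum hWmeas Finset.univ]
    rw [Finset.prod_congr rfl (fun i _ => hmgf2 i), Finset.prod_const, Finset.card_univ,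
      Fintype.card_fin]
  -- the two moments
  have hpow1 : ((2:ℝ) ^ (t1 * s₀)) ^ m = c / m := by
    rw [← Real.rpow_natCast ((2:ℝ) ^ (t1 * s₀)) m, ← Real.rpow_mul (by norm_num : (0:ℝ) ≤ 2)]
    rw [show t1 * s₀ * (m:ℝ) = s₀ by rw [ht1def]; field_simp]
    exact h2s
  have hpow2 : ((2:ℝ) ^ (t2 * s₀)) ^ m = (c / m) ^ 2 := by
    rw [← Real.rpow_natCast ((2:ℝ) ^ (t2 * s₀)) m, ← Real.rpow_mul (by norm_num : (0:ℝ) ≤ 2)]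
    rw [show t2 * s₀ * (m:ℝ) = s₀ * (2:ℕ) by rw [ht2def]; push_cast; field_simp]
    rw [Real.rpow_mul (by norm_num : (0:ℝ) ≤ 2), Real.rpow_natCast, h2s]
  have hEX : μ[fun ω => K * Real.exp ((t1 * Real.log 2) * (∑ i, W i) ω)] = c := by
    rw [integral_const_mul]
    have : μ[fun ω => Real.exp ((t1 * Real.log 2) * (∑ i, W i) ω)]
        = mgf (∑ i, W i) μ (t1 * Real.log 2) := rfl
    rw [this, hmgfS1, mul_pow ((2:ℝ) ^ (t1 * s₀)) (phi t1 r) m, hpow1, hKdef]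
    field_simp
  have hEX2 : μ[(fun ω => K * Real.exp ((t1 * Real.log 2) * (∑ i, W i) ω)) ^ 2]
      = K ^ 2 * ((c / m) ^ 2 * phi t2 r ^ m) := by
    rw [hsq, integral_const_mul]
    have : μ[fun ω => Real.exp ((t2 * Real.log 2) * (∑ i, W i) ω)]
        = mgf (∑ i, W i) μ (t2 * Real.log 2) := rfl
    rw [this, hmgfS2, mul_pow ((2:ℝ) ^ (t2 * s₀)) (phi t2 r) m, hpow2]
  -- conclude
  rw [variance_eq_sub hmem, hEX, hEX2, hKdef]
  have hφ1m : phi t1 r ^ m ≠ 0 := by positivity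
  rw [show 2 * m = m * 2 by ring, pow_mul]
  field_simp
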